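/- Let M be a finitely generated torsion-free S-module with a Z-module structure (Z the structure algebra of a finite moment graph H), and L ⊆ X a saturated sublattice. Then M^L = M ⊗_S S^L carries a canonical action of Z(H^L), and decomposes canonically as M^L = ⊕_{Ω ∈ C(H^L)} M^{L,Ω} over the connected components Ω of H^L, with M^{L,Ω} ⊆ ⊕_{x∈Ω} M^{0,x}. -/

import Mathlib

set_option maxHeartbeats 2000000
set_option synthInstance.maxHeartbeats 400000


/-- A moment graph over the lattice `X`. -/
structure MomentGraph (X : Type) where
  V : Type
  E : Type
  src : E → V
  tgt : E → V
  label : E → X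
  no_loop : ∀ e, src e ≠ tgt e

variable {n : ℕ} {k : Type} [Field k]

/-- The embedding of the lattice `X = ℤⁿ` into `S = Sym(X ⊗ k)`. -/
noncomputable def latEmb (k : Type) [Field k] (n : ℕ) (v : Fin n → ℤ) :
    MvPolynomial (Fin n) k :=
  ∑ i, MvPolynomial.C (v i : k) * MvPolynomial.X i

/-- The structure algebra `Z(H)` as an `S`-subalgebra of `∏_{x ∈ V} S`. -/
noncomputable def structAlgebra (G : MomentGraph (Fin n → ℤ)) (k : Type) [Field k] :
    Subalgebra (MvPolynomial (Fin n) k) (G.V → MvPolynomial (Fin n) k) where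
  carrier := {z | ∀ e, z (G.src e) - z (G.tgt e) ∈ Ideal.span {latEmb k n (G.label e)}}
  add_mem' := by
    intro a b ha hb e
    have := Ideal.add_mem _ (ha e) (hb e)
    simpa [add_sub_add_comm] using this
  mul_mem' := by
    intro a b ha hb e
    have h1 := Ideal.mul_mem_left _ (a (G.src e)) (hb e)
    have h2 := Ideal.mul_mem_right (b (G.tgt e)) _ (ha e)
    have := Ideal.add_mem _ h1 h2
    have heq : a (G.src e) * (b (G.src e) - b (G.tgt e)) +
        (a (G.src e) - a (G.tgt e)) * b (G.tgt e) =
        a (G.src e) * b (G.src e) - a (G.tgt e) * b (G.tgt e) := by ring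
    simpa [heq] using this
  algebraMap_mem' := by
    intro r e
    simp

/-- The subgraph `H^L`: all vertices, only edges labeled in `L`. -/
def MomentGraph.restrict (G : MomentGraph (Fin n → ℤ)) (L : Submodule ℤ (Fin n → ℤ)) :
    MomentGraph (Fin n → ℤ) where
  V := G.V
  E := {e : G.E // G.label e ∈ L}
  src e := G.src e.1
  tgt e := G.tgt e.1
  label e := G.label e.1
  no_loop e := G.no_loop e.1

lemma structAlgebra_le_restrict (G : MomentGraph (Fin n → ℤ))
    (L : Submodule ℤ (Fin n → ℤ)) (k : Type) [Field k] :
    structAlgebra G k ≤ structAlgebra (G.restrict L) k :=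
  fun _ hz e => hz e.1

/-- The multiplicative set for `S^L = S[α⁻¹ : α ∈ X, α ≠ 0, α ∉ L]`. -/
noncomputable def locSet (k : Type) [Field k] (n : ℕ) (L : Submodule ℤ (Fin n → ℤ)) :
    Submonoid (MvPolynomial (Fin n) k) :=
  Submonoid.closure {s | ∃ α : Fin n → ℤ, α ≠ 0 ∧ α ∉ L ∧ s = latEmb k n α}

/-- The multiplicative set for `S⁰ = S[α⁻¹ : α ∈ X, α ≠ 0]`. -/
noncomputable def genericSet (k : Type) [Field k] (n : ℕ) :
    Submonoid (MvPolynomial (Fin n) k) :=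
  Submonoid.closure {s | ∃ α : Fin n → ℤ, α ≠ 0 ∧ s = latEmb k n α}

/-- The set of connected components of a moment graph: the quotient of the
vertex set by the equivalence relation generated by adjacency. -/
def MomentGraph.Components (G : MomentGraph (Fin n → ℤ)) : Type :=
  Quotient (Relation.EqvGen.setoid
    (fun x y : G.V => ∃ e : G.E, G.src e = x ∧ G.tgt e = y))

section

variable (k)
variable (G : MomentGraph (Fin n → ℤ))
variable (M : Type) [AddCommGroup M]
  [Module (MvPolynomial (Fin n) k) M]
  [Module (structAlgebra G k) M]
  [IsScalarTower (MvPolynomial (Fin n) k) (structAlgebra G k) M]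

/-- The action of an element of the structure algebra as an `S`-linear map. -/
noncomputable def zsmulLin (z : structAlgebra G k) : M →ₗ[MvPolynomial (Fin n) k] M where
  toFun m := z • m
  map_add' := smul_add z
  map_smul' s m := (smul_comm s z m).symm

variable (L : Submodule ℤ (Fin n → ℤ))

/-- The generic stalk `M^{0,x}` inside `M⁰`. -/
noncomputable def genStalk (x : G.V) :
    Submodule (MvPolynomial (Fin n) k) (LocalizedModule (genericSet k n) (LocalizedModule (locSet k n L) M)) where
  carrier := {m | ∀ z : structAlgebra G k,
    LocalizedModule.map (genericSet k n)
      (LocalizedModule.map (locSet k n L) (zsmulLin k G M z)) m = (z.1 x) • m}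
  add_mem' := by
    intro a b ha hb z
    simp [ha z, hb z, smul_add]
  zero_mem' := by
    intro z
    simp
  smul_mem' := by
    intro c a ha z
    simp [ha z, smul_comm c (z.1 x)]


/-! ### Auxiliary machinery for the canonical decomposition -/

lemma mem_structAlgebra_iff {G : MomentGraph (Fin n → ℤ)} {z : G.V → MvPolynomial (Fin n) k} :
    z ∈ structAlgebra G k ↔
      ∀ e, z (G.src e) - z (G.tgt e) ∈ Ideal.span {latEmb k n (G.label e)} :=
  Iff.rfl

lemma zsmulLin_one : zsmulLin k G M 1 = LinearMap.id :=
  LinearMap.ext fun m => one_smul _ m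

lemma zsmulLin_mul (z w : structAlgebra G k) :
    zsmulLin k G M (z * w) = (zsmulLin k G M z) ∘ₗ (zsmulLin k G M w) :=
  LinearMap.ext fun m => mul_smul z w m

lemma zsmulLin_add (z w : structAlgebra G k) :
    zsmulLin k G M (z + w) = zsmulLin k G M z + zsmulLin k G M w :=
  LinearMap.ext fun m => add_smul z w m

lemma zsmulLin_zero : zsmulLin k G M 0 = 0 :=
  LinearMap.ext fun m => zero_smul _ m

lemma zsmulLin_smul (r : MvPolynomial (Fin n) k) (z : structAlgebra G k) :
    zsmulLin k G M (r • z) = r • zsmulLin k G M z :=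
  LinearMap.ext fun m => smul_assoc r z m

section LocAux

variable {R : Type*} [CommRing R] (W : Submonoid R) {N : Type*} [AddCommGroup N]
  [Module R N] [Module (Localization W) N] [IsScalarTower R (Localization W) N]

/-- The inverse of (the image of) an element of `W` in `Localization W`, as a unit. -/
noncomputable def invUnit (s : W) : (Localization W)ˣ :=
  (IsLocalization.map_units (Localization W) s).unit⁻¹

lemma invUnit_smul_smul (s : W) (x : N) :
    (invUnit W s : Localization W) • (s : R) • x = x := by
  have h := Units.inv_mul (IsLocalization.map_units (Localization W) s).unit
  rw [IsUnit.unit_spec] at h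
  rw [← algebraMap_smul (Localization W) (s : R) x, smul_smul, invUnit, h, one_smul]

lemma loc_smul_comm (a : R) (c : Localization W) (x : N) : c • a • x = a • c • x := by
  rw [← algebraMap_smul (Localization W) a x, ← algebraMap_smul (Localization W) a (c • x),
    smul_smul, smul_smul, mul_comm]

lemma locMap_comp' {M₀ : Type*} [AddCommGroup M₀] [Module R M₀] (f g : M₀ →ₗ[R] M₀)
    (x : LocalizedModule W M₀) :
    LocalizedModule.map W (f ∘ₗ g) x =
      LocalizedModule.map W f (LocalizedModule.map W g x) := by
  refine LocalizedModule.induction_on (fun m s => ?_) x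
  simp only [LocalizedModule.map_mk, LinearMap.comp_apply]

end LocAux

open Classical in
/-- The product of all labels of edges not labeled in `L` (those get a factor 1). -/
noncomputable def bigS [Fintype G.E] : MvPolynomial (Fin n) k :=
  ∏ e : G.E, if G.label e ∈ L then 1 else latEmb k n (G.label e)

lemma bigS_mem_locSet [Fintype G.E] (hnz : ∀ e, G.label e ≠ 0) :
    bigS k G L ∈ locSet k n L := by
  classical
  refine Submonoid.prod_mem _ fun e _ => ?_
  by_cases h : G.label e ∈ L
  · simp only [bigS, if_pos h]; exact one_mem _
  · simp only [bigS, if_neg h]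
    exact Submonoid.subset_closure ⟨G.label e, hnz e, h, rfl⟩

lemma bigS_mem_span [Fintype G.E] {e : G.E} (h : G.label e ∉ L) :
    bigS k G L ∈ Ideal.span {latEmb k n (G.label e)} := by
  classical
  rw [Ideal.mem_span_singleton]
  have hd := Finset.dvd_prod_of_mem
    (fun e : G.E => if G.label e ∈ L then 1 else latEmb k n (G.label e)) (Finset.mem_univ e)
  simp only [if_neg h] at hd
  simpa [bigS] using hd

/-- Scaling an element of `Z(H^L)` by `bigS` produces an element of `Z(H)`. -/
noncomputable def scaleZ [Fintype G.E] (z : structAlgebra (G.restrict L) k) :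
    structAlgebra G k :=
  ⟨bigS k G L • z.1, by
    refine (mem_structAlgebra_iff k).mpr ?_
    intro e
    show bigS k G L * z.1 (G.src e) - bigS k G L * z.1 (G.tgt e) ∈ _
    simp only [Pi.smul_apply, smul_eq_mul, ← mul_sub]
    by_cases h : G.label e ∈ L
    · exact Ideal.mul_mem_left _ _ ((mem_structAlgebra_iff k).mp z.2 ⟨e, h⟩)
    · exact Ideal.mul_mem_right _ _ (bigS_mem_span k G L h)⟩

open Classical in
/-- The product of all labels. -/
noncomputable def bigT [Fintype G.E] : MvPolynomial (Fin n) k :=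
  ∏ e : G.E, latEmb k n (G.label e)

lemma bigT_mem_genericSet [Fintype G.E] (hnz : ∀ e, G.label e ≠ 0) :
    bigT k G ∈ genericSet k n :=
  Submonoid.prod_mem _ fun e _ => Submonoid.subset_closure ⟨G.label e, hnz e, rfl⟩

lemma bigT_mem_span [Fintype G.E] (e : G.E) :
    bigT k G ∈ Ideal.span {latEmb k n (G.label e)} :=
  Ideal.mem_span_singleton.2
    (Finset.dvd_prod_of_mem (fun e : G.E => latEmb k n (G.label e)) (Finset.mem_univ e))

open Classical in
/-- The function supported at a single vertex with value `bigT`, an element of `Z(H)`. -/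
noncomputable def vertexZ [Fintype G.E] (x : G.V) : structAlgebra G k :=
  ⟨fun y => if y = x then bigT k G else 0, by
    rw [mem_structAlgebra_iff]
    intro e
    by_cases h1 : G.src e = x <;> by_cases h2 : G.tgt e = x
    · exact absurd (h1.trans h2.symm) (G.no_loop e)
    · simp only [if_pos h1, if_neg h2, sub_zero]
      exact bigT_mem_span k G e
    · simp only [if_neg h1, if_pos h2, zero_sub]
      exact neg_mem (bigT_mem_span k G e)
    · simp only [if_neg h1, if_neg h2, sub_zero]
      exact zero_mem _⟩

/-- The class of a vertex in the set of components of `H^L`. -/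
def compMk (x : (G.restrict L).V) : (G.restrict L).Components :=
  Quotient.mk (Relation.EqvGen.setoid
    (fun x y : (G.restrict L).V => ∃ e : (G.restrict L).E,
      (G.restrict L).src e = x ∧ (G.restrict L).tgt e = y)) x

lemma compMk_src_eq_tgt (e : (G.restrict L).E) :
    compMk G L ((G.restrict L).src e) = compMk G L ((G.restrict L).tgt e) :=
  Quotient.sound (Relation.EqvGen.rel _ _ ⟨e, rfl, rfl⟩)

open Classical in
/-- The idempotent in `Z(H^L)` attached to a connected component of `H^L`. -/
noncomputable def compE (Ω : (G.restrict L).Components) :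
    structAlgebra (G.restrict L) k :=
  ⟨fun x => if compMk G L x = Ω then 1 else 0, by
    rw [mem_structAlgebra_iff]
    intro e
    rw [compMk_src_eq_tgt, sub_self]
    exact zero_mem _⟩


lemma scaleZ_mul [Fintype G.E] (z w : structAlgebra (G.restrict L) k) :
    scaleZ k G L z * scaleZ k G L w = bigS k G L • scaleZ k G L (z * w) := by
  refine Subtype.ext (funext fun y => ?_)
  show (bigS k G L * z.1 y) * (bigS k G L * w.1 y) =
    bigS k G L * (bigS k G L * (z.1 y * w.1 y))
  ring

lemma scaleZ_one [Fintype G.E] : scaleZ k G L 1 = bigS k G L • 1 := rfl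

lemma scaleZ_zero [Fintype G.E] : scaleZ k G L 0 = 0 := by
  refine Subtype.ext (funext fun y => ?_)
  show bigS k G L * 0 = 0
  ring

lemma scaleZ_add [Fintype G.E] (z w : structAlgebra (G.restrict L) k) :
    scaleZ k G L (z + w) = scaleZ k G L z + scaleZ k G L w := by
  refine Subtype.ext (funext fun y => ?_)
  show bigS k G L * (z.1 y + w.1 y) = bigS k G L * z.1 y + bigS k G L * w.1 y
  ring

lemma scaleZ_smul [Fintype G.E] (r : MvPolynomial (Fin n) k)
    (z : structAlgebra (G.restrict L) k) :
    scaleZ k G L (r • z) = r • scaleZ k G L z := by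
  refine Subtype.ext (funext fun y => ?_)
  show bigS k G L * (r * z.1 y) = r * (bigS k G L * z.1 y)
  ring

lemma scaleZ_inclusion [Fintype G.E] (z : structAlgebra G k) :
    scaleZ k G L (Subalgebra.inclusion (structAlgebra_le_restrict G L k) z) =
      bigS k G L • z :=
  Subtype.ext rfl

lemma compE_mul_self (Ω : (G.restrict L).Components) :
    compE k G L Ω * compE k G L Ω = compE k G L Ω := by
  classical
  refine Subtype.ext (funext fun y => ?_)
  show (if compMk G L y = Ω then (1:MvPolynomial (Fin n) k) else 0) *
      (if compMk G L y = Ω then 1 else 0) = (if compMk G L y = Ω then 1 else 0)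
  by_cases h : compMk G L y = Ω <;> simp [h]

lemma compE_mul_orth {Ω Ω' : (G.restrict L).Components} (h : Ω ≠ Ω') :
    compE k G L Ω * compE k G L Ω' = 0 := by
  classical
  refine Subtype.ext (funext fun y => ?_)
  show (if compMk G L y = Ω then (1:MvPolynomial (Fin n) k) else 0) *
      (if compMk G L y = Ω' then 1 else 0) = 0
  by_cases h1 : compMk G L y = Ω
  · rw [if_pos h1, if_neg (fun h2 => h (h1.symm.trans h2)), mul_zero]
  · rw [if_neg h1, zero_mul]

lemma compE_sum [Fintype (G.restrict L).Components] :
    ∑ Ω, compE k G L Ω = 1 := by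
  classical
  refine Subtype.ext (funext fun y => ?_)
  rw [AddSubmonoidClass.coe_finset_sum, Finset.sum_apply]
  show ∑ Ω, (if compMk G L y = Ω then (1:MvPolynomial (Fin n) k) else 0) = 1
  rw [Finset.sum_ite_eq]
  simp

lemma mul_vertexZ [Fintype G.E] (z : structAlgebra G k) (x : G.V) :
    z * vertexZ k G x = z.1 x • vertexZ k G x := by
  classical
  refine Subtype.ext (funext fun y => ?_)
  show z.1 y * (if y = x then bigT k G else 0) = z.1 x * (if y = x then bigT k G else 0)
  by_cases h : y = x
  · rw [h]
  · rw [if_neg h, mul_zero, mul_zero]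

lemma vertexZ_sum [Fintype G.E] [Fintype G.V] :
    ∑ x, vertexZ k G x = bigT k G • 1 := by
  classical
  refine Subtype.ext (funext fun y => ?_)
  rw [AddSubmonoidClass.coe_finset_sum, Finset.sum_apply]
  show ∑ x, (if y = x then bigT k G else 0) = bigT k G * 1
  rw [Finset.sum_ite_eq]
  simp

lemma vertexZ_scaleZ_compE [Fintype G.E] {x : G.V} {Ω : (G.restrict L).Components}
    (hx : compMk G L x ≠ Ω) :
    vertexZ k G x * scaleZ k G L (compE k G L Ω) = 0 := by
  classical
  refine Subtype.ext (funext fun y => ?_)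
  show (if y = x then bigT k G else 0) *
      (bigS k G L * (if compMk G L y = Ω then 1 else 0)) = 0
  by_cases h : y = x
  · rw [h, if_neg hx, mul_zero, mul_zero]
  · rw [if_neg h, zero_mul]

/-- The canonical action of `Z(H^L)` on `M^L`. -/
noncomputable def rho [Fintype G.E] (hs : bigS k G L ∈ locSet k n L) :
    structAlgebra (G.restrict L) k →ₐ[MvPolynomial (Fin n) k]
      Module.End (MvPolynomial (Fin n) k) (LocalizedModule (locSet k n L) M) where
  toFun z := ((invUnit (locSet k n L) ⟨bigS k G L, hs⟩ : Localization (locSet k n L)) •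
      LocalizedModule.map (locSet k n L) (zsmulLin k G M (scaleZ k G L z)) :
      LocalizedModule (locSet k n L) M →ₗ[Localization (locSet k n L)]
        LocalizedModule (locSet k n L) M)
  map_one' := by
    refine LinearMap.ext fun m => ?_
    show (invUnit (locSet k n L) ⟨bigS k G L, hs⟩ : Localization (locSet k n L)) •
      LocalizedModule.map (locSet k n L) (zsmulLin k G M (scaleZ k G L 1)) m = m
    rw [scaleZ_one, zsmulLin_smul, zsmulLin_one, LinearMap.map_smul,
      LocalizedModule.map_id, LinearMap.smul_apply, LinearMap.id_apply]
    exact invUnit_smul_smul _ _ m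
  map_mul' z w := by
    refine LinearMap.ext fun m => ?_
    show (invUnit (locSet k n L) ⟨bigS k G L, hs⟩ : Localization (locSet k n L)) •
      LocalizedModule.map (locSet k n L) (zsmulLin k G M (scaleZ k G L (z * w))) m =
      (invUnit (locSet k n L) ⟨bigS k G L, hs⟩ : Localization (locSet k n L)) •
      LocalizedModule.map (locSet k n L) (zsmulLin k G M (scaleZ k G L z))
        ((invUnit (locSet k n L) ⟨bigS k G L, hs⟩ : Localization (locSet k n L)) •
          LocalizedModule.map (locSet k n L) (zsmulLin k G M (scaleZ k G L w)) m)
    rw [map_smul, ← locMap_comp', ← zsmulLin_mul, scaleZ_mul, zsmulLin_smul,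
      LinearMap.map_smul, LinearMap.smul_apply, invUnit_smul_smul]
  map_zero' := by
    refine LinearMap.ext fun m => ?_
    show (invUnit (locSet k n L) ⟨bigS k G L, hs⟩ : Localization (locSet k n L)) •
      LocalizedModule.map (locSet k n L) (zsmulLin k G M (scaleZ k G L 0)) m = 0
    rw [scaleZ_zero, zsmulLin_zero, map_zero, LinearMap.zero_apply, smul_zero]
  map_add' z w := by
    refine LinearMap.ext fun m => ?_
    show (invUnit (locSet k n L) ⟨bigS k G L, hs⟩ : Localization (locSet k n L)) •
      LocalizedModule.map (locSet k n L) (zsmulLin k G M (scaleZ k G L (z + w))) m =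
      (invUnit (locSet k n L) ⟨bigS k G L, hs⟩ : Localization (locSet k n L)) •
      LocalizedModule.map (locSet k n L) (zsmulLin k G M (scaleZ k G L z)) m +
      (invUnit (locSet k n L) ⟨bigS k G L, hs⟩ : Localization (locSet k n L)) •
      LocalizedModule.map (locSet k n L) (zsmulLin k G M (scaleZ k G L w)) m
    rw [scaleZ_add, zsmulLin_add, map_add, LinearMap.add_apply, smul_add]
  commutes' r := by
    refine LinearMap.ext fun m => ?_
    rw [Module.algebraMap_end_apply]
    show (invUnit (locSet k n L) ⟨bigS k G L, hs⟩ : Localization (locSet k n L)) •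
      LocalizedModule.map (locSet k n L)
        (zsmulLin k G M (scaleZ k G L (algebraMap _ _ r))) m = r • m
    rw [Algebra.algebraMap_eq_smul_one, scaleZ_smul, scaleZ_one, zsmulLin_smul, zsmulLin_smul,
      zsmulLin_one, LinearMap.map_smul, LinearMap.map_smul, LocalizedModule.map_id,
      LinearMap.smul_apply, LinearMap.smul_apply, LinearMap.id_apply, loc_smul_comm,
      invUnit_smul_smul]

lemma rho_apply [Fintype G.E] (hs : bigS k G L ∈ locSet k n L)
    (z : structAlgebra (G.restrict L) k) (m : LocalizedModule (locSet k n L) M) :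
    rho k G M L hs z m =
      (invUnit (locSet k n L) ⟨bigS k G L, hs⟩ : Localization (locSet k n L)) •
        LocalizedModule.map (locSet k n L) (zsmulLin k G M (scaleZ k G L z)) m := rfl

/-- The localized action of `w ∈ Z(H)` on `M^L`, as an `S`-linear map. -/
noncomputable def Fmap (w : structAlgebra G k) :
    LocalizedModule (locSet k n L) M →ₗ[MvPolynomial (Fin n) k]
      LocalizedModule (locSet k n L) M :=
  ↑(LocalizedModule.map (locSet k n L) (zsmulLin k G M w))

lemma Fmap_apply (w : structAlgebra G k) (ξ : LocalizedModule (locSet k n L) M) :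
    Fmap k G M L w ξ = LocalizedModule.map (locSet k n L) (zsmulLin k G M w) ξ := rfl

lemma Fmap_mul (w w' : structAlgebra G k) :
    Fmap k G M L (w * w') = Fmap k G M L w ∘ₗ Fmap k G M L w' := by
  refine LinearMap.ext fun ξ => ?_
  show LocalizedModule.map (locSet k n L) (zsmulLin k G M (w * w')) ξ =
    LocalizedModule.map (locSet k n L) (zsmulLin k G M w)
      (LocalizedModule.map (locSet k n L) (zsmulLin k G M w') ξ)
  rw [zsmulLin_mul]
  exact locMap_comp' _ _ _ ξ

lemma Fmap_add (w w' : structAlgebra G k) :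
    Fmap k G M L (w + w') = Fmap k G M L w + Fmap k G M L w' := by
  refine LinearMap.ext fun ξ => ?_
  show LocalizedModule.map (locSet k n L) (zsmulLin k G M (w + w')) ξ =
    LocalizedModule.map (locSet k n L) (zsmulLin k G M w) ξ +
      LocalizedModule.map (locSet k n L) (zsmulLin k G M w') ξ
  rw [zsmulLin_add, map_add, LinearMap.add_apply]

lemma Fmap_smul (r : MvPolynomial (Fin n) k) (w : structAlgebra G k) :
    Fmap k G M L (r • w) = r • Fmap k G M L w := by
  refine LinearMap.ext fun ξ => ?_
  show LocalizedModule.map (locSet k n L) (zsmulLin k G M (r • w)) ξ =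
    r • LocalizedModule.map (locSet k n L) (zsmulLin k G M w) ξ
  rw [zsmulLin_smul, LinearMap.map_smul, LinearMap.smul_apply]

lemma Fmap_one : Fmap k G M L 1 = LinearMap.id := by
  refine LinearMap.ext fun ξ => ?_
  show LocalizedModule.map (locSet k n L) (zsmulLin k G M 1) ξ = ξ
  rw [zsmulLin_one, LocalizedModule.map_id, LinearMap.id_apply]

/-- The localized action on `M^L` bundled as a linear map. -/
noncomputable def FmapL : structAlgebra G k →ₗ[MvPolynomial (Fin n) k]
    (LocalizedModule (locSet k n L) M →ₗ[MvPolynomial (Fin n) k]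
      LocalizedModule (locSet k n L) M) where
  toFun := Fmap k G M L
  map_add' := Fmap_add k G M L
  map_smul' := Fmap_smul k G M L

/-- The doubly-localized action on `M⁰` bundled as a linear map. -/
noncomputable def BmapL : structAlgebra G k →ₗ[MvPolynomial (Fin n) k]
    (LocalizedModule (genericSet k n) (LocalizedModule (locSet k n L) M)
      →ₗ[Localization (genericSet k n)]
      LocalizedModule (genericSet k n) (LocalizedModule (locSet k n L) M)) :=
  (LocalizedModule.map (genericSet k n)) ∘ₗ FmapL k G M L

lemma BmapL_apply (w : structAlgebra G k) :
    BmapL k G M L w = LocalizedModule.map (genericSet k n) (Fmap k G M L w) := rfl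

lemma BmapL_mul (w w' : structAlgebra G k)
    (ξ : LocalizedModule (genericSet k n) (LocalizedModule (locSet k n L) M)) :
    BmapL k G M L (w * w') ξ = BmapL k G M L w (BmapL k G M L w' ξ) := by
  rw [BmapL_apply, BmapL_apply, BmapL_apply, Fmap_mul]
  exact locMap_comp' _ _ _ ξ


lemma BmapL_one : BmapL k G M L 1 = LinearMap.id := by
  rw [BmapL_apply, Fmap_one, LocalizedModule.map_id]

lemma mem_genStalk (x : G.V)
    (m0 : LocalizedModule (genericSet k n) (LocalizedModule (locSet k n L) M))
    (h : ∀ z : structAlgebra G k, BmapL k G M L z m0 = z.1 x • m0) :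
    m0 ∈ genStalk k G M L x := h

/-- Let `M` be a finitely generated torsion-free `S`-module with
a `Z`-module structure, `L ⊆ X` a saturated sublattice.  Then
`M^L = M ⊗_S S^L` carries a canonical action of `Z(H^L)` extending the
(localized) `Z`-action, and decomposes canonically as
`M^L = ⊕_{Ω ∈ C(H^L)} M^{L,Ω}` over the connected components of `H^L`, with
each `M^{L,Ω}` mapping into `⊕_{x ∈ Ω} M^{0,x}` inside `M⁰`. -/
theorem canonical_decomposition
    [Finite G.V] [Finite G.E] (hnz : ∀ e, G.label e ≠ 0)
    [Module.Finite (MvPolynomial (Fin n) k) M]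
    (htf : ∀ (s : MvPolynomial (Fin n) k) (m : M), s ≠ 0 → s • m = 0 → m = 0)
    (hsat : ∀ (x : Fin n → ℤ) (c : ℤ), c ≠ 0 → c • x ∈ L → x ∈ L) :
    ∃ (ρ : structAlgebra (G.restrict L) k →ₐ[MvPolynomial (Fin n) k]
          Module.End (MvPolynomial (Fin n) k) (LocalizedModule (locSet k n L) M))
      (N : (G.restrict L).Components → Submodule (MvPolynomial (Fin n) k) (LocalizedModule (locSet k n L) M)),
      (∀ z : structAlgebra G k,
        ρ (Subalgebra.inclusion (structAlgebra_le_restrict G L k) z) =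
          LocalizedModule.map (locSet k n L) (zsmulLin k G M z)) ∧
      iSupIndep N ∧
      (⨆ Ω, N Ω) = ⊤ ∧
      (∀ (Ω : (G.restrict L).Components) (z : structAlgebra (G.restrict L) k),
        Submodule.map (ρ z) (N Ω) ≤ N Ω) ∧
      (∀ Ω : (G.restrict L).Components,
        Submodule.map (LocalizedModule.mkLinearMap (genericSet k n) (LocalizedModule (locSet k n L) M)) (N Ω) ≤
          ⨆ x ∈ {x : G.V | Quotient.mk _ x = Ω}, genStalk k G M L x) := by
  classical
  haveI : Fintype G.E := Fintype.ofFinite _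
  haveI : Fintype G.V := Fintype.ofFinite _
  haveI : Finite ((G.restrict L).V) := ‹Finite G.V›
  haveI : Finite ((G.restrict L).Components) := Quotient.finite _
  haveI : Fintype ((G.restrict L).Components) := Fintype.ofFinite _
  have hsmem := bigS_mem_locSet k G L hnz
  have htmem := bigT_mem_genericSet k G hnz
  have hidem : ∀ (Ω : (G.restrict L).Components) (m : LocalizedModule (locSet k n L) M),
      rho k G M L hsmem (compE k G L Ω) (rho k G M L hsmem (compE k G L Ω) m) =
        rho k G M L hsmem (compE k G L Ω) m := by
    intro Ω m
    rw [← Module.End.mul_apply, ← map_mul, compE_mul_self]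
  have hfix : ∀ (Ω : (G.restrict L).Components) (m : LocalizedModule (locSet k n L) M),
      m ∈ LinearMap.range (rho k G M L hsmem (compE k G L Ω)) ↔
        rho k G M L hsmem (compE k G L Ω) m = m := by
    intro Ω m
    constructor
    · rintro ⟨y, rfl⟩; exact hidem Ω y
    · intro h; exact ⟨m, h⟩
  refine ⟨rho k G M L hsmem,
    fun Ω => LinearMap.range (rho k G M L hsmem (compE k G L Ω)), ?_, ?_, ?_, ?_, ?_⟩
  · -- agreement with the localized Z(H)-action
    intro z
    refine LinearMap.ext fun m => ?_
    refine (rho_apply k G M L hsmem _ m).trans ?_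
    rw [scaleZ_inclusion, zsmulLin_smul, LinearMap.map_smul, LinearMap.smul_apply,
      invUnit_smul_smul]
    rfl
  · -- independence
    intro Ω
    refine Submodule.disjoint_def.mpr fun m hm1 hm2 => ?_
    have hker : (⨆ (j) (_ : j ≠ Ω), LinearMap.range (rho k G M L hsmem (compE k G L j))) ≤
        LinearMap.ker (rho k G M L hsmem (compE k G L Ω)) := by
      refine iSup_le fun j => iSup_le fun hj => ?_
      rintro _ ⟨y, rfl⟩
      rw [LinearMap.mem_ker, ← Module.End.mul_apply, ← map_mul,
        compE_mul_orth k G L (Ne.symm hj), map_zero]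
      rfl
    have h0 := hker hm2
    rw [LinearMap.mem_ker] at h0
    exact ((hfix Ω m).mp hm1).symm.trans h0
  · -- the pieces span
    rw [eq_top_iff]
    intro m _
    have hsumP : (∑ Ω, rho k G M L hsmem (compE k G L Ω)) = 1 := by
      rw [← map_sum, compE_sum, map_one]
    have hdec : m = ∑ Ω, rho k G M L hsmem (compE k G L Ω) m := by
      calc m = (1 : Module.End (MvPolynomial (Fin n) k) (LocalizedModule (locSet k n L) M)) m :=
          (Module.End.one_apply m).symm
        _ = (∑ Ω, rho k G M L hsmem (compE k G L Ω)) m := by rw [hsumP]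
        _ = ∑ Ω, rho k G M L hsmem (compE k G L Ω) m := LinearMap.sum_apply _ _ m
    rw [hdec]
    exact Submodule.sum_mem _ fun Ω _ => Submodule.mem_iSup_of_mem Ω ⟨m, rfl⟩
  · -- invariance
    intro Ω z
    rintro _ ⟨_, ⟨y, rfl⟩, rfl⟩
    refine ⟨rho k G M L hsmem z y, ?_⟩
    rw [← Module.End.mul_apply, ← map_mul, mul_comm (compE k G L Ω) z, map_mul,
      Module.End.mul_apply]
  · -- mapping into the generic stalks
    intro Ω
    rintro _ ⟨m, hm, rfl⟩
    have hmfix := (hfix Ω m).mp hm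
    have hBsum : ∑ x : G.V,
        BmapL k G M L (vertexZ k G x)
          (LocalizedModule.mkLinearMap (genericSet k n) (LocalizedModule (locSet k n L) M) m) =
        bigT k G •
          LocalizedModule.mkLinearMap (genericSet k n) (LocalizedModule (locSet k n L) M) m := by
      rw [← LinearMap.sum_apply, ← map_sum, vertexZ_sum, LinearMap.map_smul, BmapL_one,
        LinearMap.smul_apply, LinearMap.id_apply]
    have key : LocalizedModule.mkLinearMap (genericSet k n) (LocalizedModule (locSet k n L) M) m
        = ∑ x : G.V,
            (invUnit (genericSet k n) ⟨bigT k G, htmem⟩ : Localization (genericSet k n)) •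
            BmapL k G M L (vertexZ k G x)
              (LocalizedModule.mkLinearMap (genericSet k n)
                (LocalizedModule (locSet k n L) M) m) := by
      rw [← Finset.smul_sum, hBsum]
      exact (invUnit_smul_smul (genericSet k n) ⟨bigT k G, htmem⟩
        (LocalizedModule.mkLinearMap (genericSet k n) (LocalizedModule (locSet k n L) M) m)).symm
    rw [key]
    refine Submodule.sum_mem _ fun x _ => ?_
    by_cases hx : compMk G L x = Ω
    · refine Submodule.mem_iSup_of_mem x (Submodule.mem_iSup_of_mem hx ?_)
      refine mem_genStalk k G M L x _ fun z => ?_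
      rw [map_smul, ← BmapL_mul, mul_vertexZ, LinearMap.map_smul, LinearMap.smul_apply,
        loc_smul_comm]
    · have h0 : Fmap k G M L (vertexZ k G x) m = 0 := by
        conv_lhs => rw [← hmfix]
        rw [Fmap_apply, rho_apply, map_smul, ← locMap_comp', ← zsmulLin_mul,
          vertexZ_scaleZ_compE k G L hx, zsmulLin_zero, map_zero, LinearMap.zero_apply,
          smul_zero]
      have h1 : BmapL k G M L (vertexZ k G x)
          (LocalizedModule.mkLinearMap (genericSet k n)
            (LocalizedModule (locSet k n L) M) m) = 0 := by
        rw [BmapL_apply, LocalizedModule.mkLinearMap_apply, LocalizedModule.map_mk]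
        rw [show LocalizedModule.mk (Fmap k G M L (vertexZ k G x) m) 1 =
          LocalizedModule.mk (0 : LocalizedModule (locSet k n L) M) 1 from by rw [h0]]
        exact LocalizedModule.zero_mk 1
      rw [h1, smul_zero]
      exact zero_mem _


end
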